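/- Let G(t), t ∈ ℝ, be a continuous flow on a compact connected metric space X that is chain recurrent (for all x ∈ X, ε > 0, T > 0 there exist k ≥ 1, times t₁,…,t_k ≥ T, and points x₀ = x, x₁, …, x_k = x with d(G(t_{i+1}) x_i, x_{i+1}) < ε for 0 ≤ i < k). If M₁, …, M_k is a Morse decomposition of X (mutually disjoint compact invariant sets such that every orbit outside their union has α-limit in some M_i and ω-limit in some M_j with i < j), then X = M₁ ∪ … ∪ M_k; consequently, since X is connected and the M_j are disjoint compact sets, k = 1 and X = M₁. -/

import Mathlib

open Filter Metric Topology

private lemma flow_exists_omega_pt {X : Type*} [MetricSpace X] [CompactSpace X]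
    (G : ℝ → X → X) (x : X) :
    ∃ y : X, ∃ ts : ℕ → ℝ, Tendsto ts atTop atTop ∧
      Tendsto (fun n => G (ts n) x) atTop (nhds y) := by
  obtain ⟨y, -, φ, hφ, hconv⟩ := isCompact_univ.tendsto_subseq
    (x := fun n : ℕ => G (n : ℝ) x) (fun n => Set.mem_univ _)
  exact ⟨y, fun n => ((φ n : ℕ) : ℝ),
    tendsto_natCast_atTop_atTop.comp hφ.tendsto_atTop, hconv⟩

private lemma flow_exists_alpha_pt {X : Type*} [MetricSpace X] [CompactSpace X]
    (G : ℝ → X → X) (x : X) :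
    ∃ y : X, ∃ ts : ℕ → ℝ, Tendsto ts atTop atBot ∧
      Tendsto (fun n => G (ts n) x) atTop (nhds y) := by
  obtain ⟨y, -, φ, hφ, hconv⟩ := isCompact_univ.tendsto_subseq
    (x := fun n : ℕ => G (-(n : ℝ)) x) (fun n => Set.mem_univ _)
  refine ⟨y, fun n => -((φ n : ℕ) : ℝ), ?_, hconv⟩
  exact tendsto_neg_atTop_atBot.comp (tendsto_natCast_atTop_atTop.comp hφ.tendsto_atTop)

private lemma flow_eventually_infDist_lt {X : Type*} [MetricSpace X] [CompactSpace X]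
    (G : ℝ → X → X) (x : X) (A : Set X)
    (h : ∀ y : X, (∃ ts : ℕ → ℝ, Tendsto ts atTop atTop ∧
      Tendsto (fun n => G (ts n) x) atTop (nhds y)) → y ∈ A)
    (c : ℝ) (hc : 0 < c) :
    ∀ᶠ t in (atTop : Filter ℝ), infDist (G t x) A < c := by
  by_contra hcon
  rw [Filter.not_eventually] at hcon
  have hseq : ∀ n : ℕ, ∃ t : ℝ, (n : ℝ) ≤ t ∧ c ≤ infDist (G t x) A := by
    intro n
    obtain ⟨t, ht, hp⟩ := frequently_atTop.mp hcon (n : ℝ)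
    exact ⟨t, ht, not_lt.mp hp⟩
  choose t ht hct using hseq
  have htt : Tendsto t atTop atTop := tendsto_atTop_mono ht tendsto_natCast_atTop_atTop
  obtain ⟨y, -, φ, hφ, hconv⟩ := isCompact_univ.tendsto_subseq
    (x := fun n => G (t n) x) (fun n => Set.mem_univ _)
  have hy : y ∈ A := h y ⟨t ∘ φ, htt.comp hφ.tendsto_atTop, hconv⟩
  have h1 : c ≤ infDist y A :=
    ge_of_tendsto (((continuous_infDist_pt A).tendsto y).comp hconv)
      (Eventually.of_forall fun n => hct (φ n))
  have h2 : infDist y A = 0 := infDist_zero_of_mem hy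
  linarith

/-- A chain recurrent continuous flow on a compact connected metric space admitting a
Morse decomposition `M₁, …, M_k` (mutually disjoint nonempty compact invariant sets
such that every orbit outside their union connects some `M_i` to some `M_j` with
`i < j`) satisfies `X = ⋃ M_j`, and hence `k = 1`. -/
theorem stmt_19 {X : Type*} [MetricSpace X] [CompactSpace X] [ConnectedSpace X]
    (G : ℝ → X → X)
    (hcont : Continuous fun p : ℝ × X => G p.1 p.2)
    (hid : ∀ x, G 0 x = x)
    (hgroup : ∀ s t x, G (s + t) x = G s (G t x))
    (hchain : ∀ (x : X) (ε T : ℝ), 0 < ε → 0 < T →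
      ∃ (m : ℕ) (xs : ℕ → X) (ts : ℕ → ℝ), 1 ≤ m ∧ xs 0 = x ∧ xs m = x ∧
        ∀ i < m, T ≤ ts (i + 1) ∧ dist (G (ts (i + 1)) (xs i)) (xs (i + 1)) < ε)
    (k : ℕ) (hk : 0 < k) (M : Fin k → Set X)
    (hne : ∀ j, (M j).Nonempty)
    (hcomp : ∀ j, IsCompact (M j))
    (hdisj : ∀ i j, i ≠ j → Disjoint (M i) (M j))
    (hinv : ∀ j, ∀ x ∈ M j, ∀ t, G t x ∈ M j)
    (hconn : ∀ x, x ∉ ⋃ j, M j →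
      ∃ i j : Fin k, i < j ∧
        {y : X | ∃ ts : ℕ → ℝ, Filter.Tendsto ts Filter.atTop Filter.atBot ∧
          Filter.Tendsto (fun n => G (ts n) x) Filter.atTop (nhds y)} ⊆ M i ∧
        {y : X | ∃ ts : ℕ → ℝ, Filter.Tendsto ts Filter.atTop Filter.atTop ∧
          Filter.Tendsto (fun n => G (ts n) x) Filter.atTop (nhds y)} ⊆ M j) :
    (⋃ j, M j) = Set.univ ∧ k = 1 := by
  classical
  have cG1 : ∀ t : ℝ, Continuous fun y : X => G t y := fun t =>
    hcont.comp (continuous_const.prodMk continuous_id)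
  have cG2 : ∀ y : X, Continuous fun t : ℝ => G t y := fun y =>
    hcont.comp (continuous_id.prodMk continuous_const)
  have hGG : ∀ s t (x : X), G s (G t x) = G (s + t) x := fun s t x => (hgroup s t x).symm
  rcases Nat.lt_or_ge k 2 with hk2' | hk2
  · -- k = 1
    have hk1 : k = 1 := by omega
    subst hk1
    refine ⟨?_, rfl⟩
    ext x
    simp only [Set.mem_univ, iff_true, Set.mem_iUnion]
    by_contra hx
    have hx' : x ∉ ⋃ j, M j := by
      simpa only [Set.mem_iUnion] using hx
    obtain ⟨i, j, hij, -, -⟩ := hconn x hx'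
    have : (i : ℕ) < (j : ℕ) := hij
    omega
  · exfalso
    have hO : ∃ x : X, x ∉ ⋃ l, M l := by
      set b0 : Fin k := ⟨0, by omega⟩
      set b1 : Fin k := ⟨1, by omega⟩
      have hb01 : b0 ≠ b1 := by
        intro h
        have := congrArg Fin.val h
        simp [b0, b1] at this
      by_contra h
      push_neg at h
      have hcompl : (M b0)ᶜ = ⋃ b ∈ {b : Fin k | b ≠ b0}, M b := by
        ext x
        constructor
        · intro hx
          obtain ⟨b, hb⟩ := Set.mem_iUnion.mp (h x)
          refine Set.mem_biUnion (show b ≠ b0 from ?_) hb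
          intro e
          exact hx (e ▸ hb)
        · intro hx hx0
          obtain ⟨b, hb, hxb⟩ := Set.mem_iUnion₂.mp hx
          exact Set.disjoint_left.mp (hdisj b b0 hb) hxb hx0
      have hcl : IsClosed ((M b0)ᶜ) := by
        rw [hcompl]
        exact Set.Finite.isClosed_biUnion (Set.toFinite _) fun b _ => (hcomp b).isClosed
      have hclopen : IsClopen (M b0) := ⟨(hcomp b0).isClosed, isClosed_compl_iff.mp hcl⟩
      rcases isClopen_iff.mp hclopen with he | hu
      · exact (hne b0).ne_empty he
      · obtain ⟨y1, hy1⟩ := hne b1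
        have hy0 : y1 ∈ M b0 := hu ▸ Set.mem_univ y1
        exact Set.disjoint_left.mp (hdisj b0 b1 hb01) hy0 hy1
    -- the set of possible ω-levels of outside points
    set S : Set (Fin k) := {j : Fin k | ∃ x : X, x ∉ (⋃ l, M l) ∧
      {y : X | ∃ ts : ℕ → ℝ, Tendsto ts atTop atTop ∧
        Tendsto (fun n => G (ts n) x) atTop (nhds y)} ⊆ M j} with hSdef
    have hSne : S.Nonempty := by
      obtain ⟨x, hx⟩ := hO
      obtain ⟨i, j, hij, hα, hω⟩ := hconn x hx
      exact ⟨j, x, hx, hω⟩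
    set F : Finset (Fin k) := S.toFinite.toFinset with hFdef
    have hFne : F.Nonempty := by
      obtain ⟨j, hj⟩ := hSne
      exact ⟨j, (Set.Finite.mem_toFinset _).mpr hj⟩
    set top : Fin k := F.max' hFne with htopdef
    have htopS : top ∈ S := (Set.Finite.mem_toFinset _).mp (F.max'_mem hFne)
    have hmax : ∀ j ∈ S, j ≤ top := fun j hj =>
      F.le_max' j ((Set.Finite.mem_toFinset _).mpr hj)
    obtain ⟨x₀, hx₀O, hx₀ω⟩ := htopS
    set A : Set X := M top with hAdef
    have hAcl : IsClosed A := (hcomp top).isClosed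
    have hAne : A.Nonempty := hne top
    -- gap
    have hgapE : ∃ gap : ℝ, 0 < gap ∧ ∀ b : Fin k, b ≠ top → ∀ q ∈ M b, gap ≤ infDist q A := by
      set C : Set X := ⋃ b ∈ {b : Fin k | b ≠ top}, M b with hCdef
      have hCc : IsCompact C := (Set.toFinite {b : Fin k | b ≠ top}).isCompact_biUnion
        fun b _ => hcomp b
      have hCne : C.Nonempty := by
        have hbne : ∃ b : Fin k, b ≠ top := by
          rcases eq_or_ne top ⟨0, by omega⟩ with h | h
          · refine ⟨⟨1, by omega⟩, ?_⟩
            rw [h]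
            intro hh
            have := congrArg Fin.val hh
            simp at this
          · exact ⟨⟨0, by omega⟩, fun hh => h hh.symm⟩
        obtain ⟨b, hb⟩ := hbne
        obtain ⟨q, hq⟩ := hne b
        exact ⟨q, Set.mem_biUnion hb hq⟩
      obtain ⟨q₀, hq₀C, hq₀min⟩ := hCc.exists_isMinOn hCne
        ((continuous_infDist_pt A).continuousOn)
      refine ⟨infDist q₀ A, ?_, fun b hb q hq => hq₀min (Set.mem_biUnion hb hq)⟩
      obtain ⟨b, hb, hq₀b⟩ := Set.mem_iUnion₂.mp hq₀C
      rcases lt_or_eq_of_le (infDist_nonneg (x := q₀) (s := A)) with h | h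
      · exact h
      · exfalso
        have hq₀A : q₀ ∈ A := (hAcl.mem_iff_infDist_zero hAne).mpr h.symm
        exact Set.disjoint_left.mp (hdisj b top hb) hq₀b hq₀A
    obtain ⟨gap, hgap0, hgap⟩ := hgapE
    -- x₀ is away from A
    have hx₀A : x₀ ∉ A := fun h => hx₀O (Set.mem_iUnion.mpr ⟨top, h⟩)
    set dx0 : ℝ := infDist x₀ A with hdx0def
    have hdx0 : 0 < dx0 := by
      rcases lt_or_eq_of_le (infDist_nonneg (x := x₀) (s := A)) with h | h
      · exact h
      · exact absurd ((hAcl.mem_iff_infDist_zero hAne).mpr h.symm) hx₀A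
    set η : ℝ := min (gap / 2) (dx0 / 2) with hηdef
    have hη0 : 0 < η := lt_min (by linarith) (by linarith)
    have hηgap : η < gap := lt_of_le_of_lt (min_le_left _ _) (by linarith)
    have hηdx : η ≤ dx0 / 2 := min_le_right _ _
    -- stability
    have STAB : ∀ θ : ℝ, 0 < θ → θ < gap →
        ∃ ρ : ℝ, 0 < ρ ∧ ρ < θ ∧
          ∀ y : X, infDist y A ≤ ρ → ∀ t : ℝ, 0 ≤ t → infDist (G t y) A < θ := by
      intro θ hθ0 hθgap
      by_contra hcon
      push_neg at hcon
      have hseq : ∀ n : ℕ, ∃ y : X, infDist y A ≤ θ / 2 * (1 / ((n : ℝ) + 1)) ∧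
          ∃ t : ℝ, 0 ≤ t ∧ θ ≤ infDist (G t y) A := by
        intro n
        have h1 : (0:ℝ) < θ / 2 * (1 / ((n : ℝ) + 1)) := by positivity
        have h2 : θ / 2 * (1 / ((n : ℝ) + 1)) < θ := by
          have hn1 : (1:ℝ) ≤ (n : ℝ) + 1 := by linarith [Nat.cast_nonneg (α := ℝ) n]
          have : (1 : ℝ) / ((n : ℝ) + 1) ≤ 1 := by
            rw [div_le_one (by positivity)]; exact hn1
          nlinarith
        exact hcon _ h1 h2
      choose y hy te hte hteθ using hseq
      -- exit times
      have hexit : ∀ n : ℕ, ∃ τ : ℝ, 0 ≤ τ ∧ θ ≤ infDist (G τ (y n)) A ∧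
          ∀ t : ℝ, 0 ≤ t → t < τ → infDist (G t (y n)) A < θ := by
        intro n
        set Sn : Set ℝ := {t : ℝ | 0 ≤ t ∧ θ ≤ infDist (G t (y n)) A} with hSndef
        have hSne' : Sn.Nonempty := ⟨te n, hte n, hteθ n⟩
        have hScl : IsClosed Sn := by
          have : Sn = Set.Ici (0:ℝ) ∩ {t : ℝ | θ ≤ infDist (G t (y n)) A} := rfl
          rw [this]
          exact isClosed_Ici.inter
            (isClosed_le continuous_const ((continuous_infDist_pt A).comp (cG2 (y n))))
        have hbdd : BddBelow Sn := ⟨0, fun t ht => ht.1⟩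
        obtain ⟨h1, h2⟩ := hScl.csInf_mem hSne' hbdd
        refine ⟨sInf Sn, h1, h2, fun t ht0 htlt => ?_⟩
        by_contra hge
        push_neg at hge
        exact absurd (csInf_le hbdd ⟨ht0, hge⟩) (not_le.mpr htlt)
      choose τ hτ0 hτθ hτlt using hexit
      -- first extraction : y converges to a point of A
      obtain ⟨z, -, φ, hφ, hyz⟩ := isCompact_univ.tendsto_subseq (x := y)
        (fun n => Set.mem_univ _)
      have hzA : z ∈ A := by
        have h0 : Tendsto (fun n => infDist (y (φ n)) A) atTop (nhds (infDist z A)) :=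
          ((continuous_infDist_pt A).tendsto z).comp hyz
        have hg : Tendsto (fun n : ℕ => θ / 2 * (1 / ((n : ℝ) + 1))) atTop (nhds 0) := by
          have := tendsto_one_div_add_atTop_nhds_zero_nat.const_mul (θ / 2)
          simpa using this
        have hsq : Tendsto (fun n => infDist (y (φ n)) A) atTop (nhds 0) :=
          squeeze_zero (fun n => infDist_nonneg) (fun n => hy (φ n))
            (hg.comp hφ.tendsto_atTop)
        have : infDist z A = 0 := tendsto_nhds_unique h0 hsq
        exact (hAcl.mem_iff_infDist_zero hAne).mpr this
      -- exit times tend to infinity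
      have hτtop : Tendsto (fun n => τ (φ n)) atTop atTop := by
        by_contra hno
        rw [Filter.tendsto_atTop] at hno
        push_neg at hno
        obtain ⟨C, hC⟩ := hno
        have hC' : ∃ᶠ n in atTop, τ (φ n) < C := hC
        obtain ⟨ψ, hψ, hψC⟩ := Filter.extraction_of_frequently_atTop hC'
        obtain ⟨t₀, -, ψ2, hψ2, hτconv⟩ := (isCompact_Icc (a := (0:ℝ)) (b := C)).tendsto_subseq
          (x := fun n => τ (φ (ψ n))) (fun n => ⟨hτ0 _, (hψC n).le⟩)
        have hyz2 : Tendsto (fun n => y (φ (ψ (ψ2 n)))) atTop (nhds z) :=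
          hyz.comp ((hψ.comp hψ2).tendsto_atTop)
        have hpair : Tendsto
            (fun n => G (τ (φ (ψ (ψ2 n)))) (y (φ (ψ (ψ2 n))))) atTop (nhds (G t₀ z)) :=
          (hcont.tendsto (t₀, z)).comp (hτconv.prodMk_nhds hyz2)
        have hGz : G t₀ z ∈ A := hinv top z hzA t₀
        have hθle : θ ≤ infDist (G t₀ z) A :=
          ge_of_tendsto (((continuous_infDist_pt A).tendsto _).comp hpair)
            (Eventually.of_forall fun n => hτθ _)
        have : infDist (G t₀ z) A = 0 := infDist_zero_of_mem hGz
        linarith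
      -- second extraction : exit points converge
      obtain ⟨w, -, χ, hχ, hwconv⟩ := isCompact_univ.tendsto_subseq
        (x := fun n => G (τ (φ n)) (y (φ n))) (fun n => Set.mem_univ _)
      have hτχtop : Tendsto (fun n => τ (φ (χ n))) atTop atTop :=
        hτtop.comp hχ.tendsto_atTop
      have hwθ : θ ≤ infDist w A :=
        ge_of_tendsto (((continuous_infDist_pt A).tendsto w).comp hwconv)
          (Eventually.of_forall fun n => hτθ _)
      -- backward orbit of w stays near A
      have hback : ∀ s' : ℝ, 0 < s' → infDist (G (-s') w) A ≤ θ := by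
        intro s' hs'
        have h1 : Tendsto (fun n => G (-s') (G (τ (φ (χ n))) (y (φ (χ n)))))
            atTop (nhds (G (-s') w)) := ((cG1 (-s')).tendsto w).comp hwconv
        refine le_of_tendsto (((continuous_infDist_pt A).tendsto _).comp h1) ?_
        have hev : ∀ᶠ n in atTop, s' ≤ τ (φ (χ n)) := hτχtop.eventually (eventually_ge_atTop s')
        filter_upwards [hev] with n hn
        show infDist (G (-s') (G (τ (φ (χ n))) (y (φ (χ n))))) A ≤ θ
        have heq : G (-s') (G (τ (φ (χ n))) (y (φ (χ n)))) =
            G (τ (φ (χ n)) - s') (y (φ (χ n))) := by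
          rw [hGG]; ring_nf
        rw [heq]
        exact (hτlt _ _ (by linarith) (by linarith)).le
      -- w not in the union
      have hwO : w ∉ ⋃ l, M l := by
        intro hw
        obtain ⟨b, hb⟩ := Set.mem_iUnion.mp hw
        rcases eq_or_ne b top with hbt | hbt
        · have : infDist w A = 0 := infDist_zero_of_mem (by rw [hAdef, ← hbt]; exact hb)
          linarith
        · have hg1 := hgap b hbt w hb
          have hwle : infDist w A ≤ θ := by
            have h1 : Tendsto (fun m : ℕ => G (-(1 / ((m:ℝ) + 1))) w) atTop (nhds w) := by
              have h2 : Tendsto (fun m : ℕ => -(1 / ((m:ℝ) + 1))) atTop (nhds 0) := by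
                have := (tendsto_one_div_add_atTop_nhds_zero_nat (𝕜 := ℝ)).neg
                simpa using this
              have h3 := ((cG2 w).tendsto 0).comp h2
              simpa [hid, Function.comp_def] using h3
            exact le_of_tendsto (((continuous_infDist_pt A).tendsto w).comp h1)
              (Eventually.of_forall fun m => hback _ (by positivity))
          linarith
      obtain ⟨i, j, hij, hα, hω⟩ := hconn w hwO
      obtain ⟨a, ts, hts, hconva⟩ := flow_exists_alpha_pt G w
      have haM : a ∈ M i := hα ⟨ts, hts, hconva⟩
      have haθ : infDist a A ≤ θ := by
        refine le_of_tendsto (((continuous_infDist_pt A).tendsto a).comp hconva) ?_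
        have hev : ∀ᶠ n in atTop, ts n ≤ -1 := hts.eventually (eventually_le_atBot (-1))
        filter_upwards [hev] with n hn
        have h1 : infDist (G (-(-(ts n))) w) A ≤ θ := hback (-(ts n)) (by linarith)
        simpa using h1
      have hitop : i = top := by
        by_contra hne'
        exact absurd (hgap i hne' a haM) (by linarith)
      have hjS : j ∈ S := ⟨w, hwO, hω⟩
      have hjle : j ≤ top := hmax j hjS
      rw [hitop] at hij
      exact absurd hjle (not_le.mpr hij)
    obtain ⟨r, hr0, hrη, hstabη⟩ := STAB η hη0 hηgap
    -- basin: points within r of A have ω-limit in A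
    have hbasin : ∀ v : X, infDist v A ≤ r →
        ∀ q : X, (∃ ts : ℕ → ℝ, Tendsto ts atTop atTop ∧
          Tendsto (fun n => G (ts n) v) atTop (nhds q)) → q ∈ A := by
      intro v hv q hq
      obtain ⟨ts, hts, hconv⟩ := hq
      have hqη : infDist q A ≤ η := by
        have hev : ∀ᶠ n in atTop, (0:ℝ) ≤ ts n := hts.eventually (eventually_ge_atTop 0)
        refine le_of_tendsto (((continuous_infDist_pt A).tendsto q).comp hconv) ?_
        filter_upwards [hev] with n hn
        exact (hstabη v hv (ts n) hn).le
      by_cases hvO : v ∈ ⋃ l, M l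
      · obtain ⟨b, hvb⟩ := Set.mem_iUnion.mp hvO
        have hqb : q ∈ M b :=
          (hcomp b).isClosed.mem_of_tendsto hconv
            (Eventually.of_forall fun n => hinv b v hvb (ts n))
        rcases eq_or_ne b top with hbt | hbt
        · rw [hAdef, ← hbt]; exact hqb
        · exact absurd (hgap b hbt q hqb) (by linarith)
      · obtain ⟨i, j, hij, hα, hω⟩ := hconn v hvO
        have hqj : q ∈ M j := hω ⟨ts, hts, hconv⟩
        rcases eq_or_ne j top with hjt | hjt
        · rw [hAdef, ← hjt]; exact hqj
        · exact absurd (hgap j hjt q hqj) (by linarith)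
    obtain ⟨s, hs0, hsr, hstabr⟩ := STAB (r / 2) (by linarith) (by linarith)
    -- uniform attraction
    have huniform : ∃ Tu : ℝ, ∀ v : X, infDist v A ≤ r → ∀ t : ℝ, Tu ≤ t →
        infDist (G t v) A < r / 2 := by
      have hexists_t : ∀ v : X, infDist v A ≤ r → ∃ tv : ℝ, infDist (G tv v) A < s :=
        fun v hv => (flow_eventually_infDist_lt G v A (hbasin v hv) s hs0).exists
      choose! tf htf using hexists_t
      have hopen : ∀ v : X, IsOpen {u : X | infDist (G (tf v) u) A < s} := fun v =>
        isOpen_lt ((continuous_infDist_pt A).comp (cG1 (tf v))) continuous_const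
      set K : Set X := {u : X | infDist u A ≤ r} with hKdef
      have hKc : IsCompact K :=
        (isClosed_le (continuous_infDist_pt A) continuous_const).isCompact
      have hKcover : K ⊆ ⋃ v : X, {u : X | infDist (G (tf v) u) A < s} :=
        fun u hu => Set.mem_iUnion.mpr ⟨u, htf u hu⟩
      obtain ⟨Fs, hFs⟩ := hKc.elim_finite_subcover _ hopen hKcover
      obtain ⟨a₀, ha₀⟩ := hAne
      have ha₀K : a₀ ∈ K := by
        have : infDist a₀ A = 0 := infDist_zero_of_mem ha₀
        simp only [hKdef, Set.mem_setOf_eq, this]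
        linarith
      have hFsne : Fs.Nonempty := by
        obtain ⟨v, hvF, -⟩ := Set.mem_iUnion₂.mp (hFs ha₀K)
        exact ⟨v, hvF⟩
      refine ⟨Fs.sup' hFsne tf, fun v hv t ht => ?_⟩
      obtain ⟨i, hiF, hiU⟩ := Set.mem_iUnion₂.mp (hFs hv)
      have hle : tf i ≤ t := le_trans (Finset.le_sup' tf hiF) ht
      have h1 : infDist (G (t - tf i) (G (tf i) v)) A < r / 2 :=
        hstabr _ (le_of_lt hiU) (t - tf i) (by linarith)
      rwa [hGG, sub_add_cancel] at h1
    obtain ⟨Tu, huni⟩ := huniform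
    -- entry time for x₀
    have hx₀basin : ∀ q : X, (∃ ts : ℕ → ℝ, Tendsto ts atTop atTop ∧
        Tendsto (fun n => G (ts n) x₀) atTop (nhds q)) → q ∈ A := fun q hq => hx₀ω hq
    obtain ⟨T₀, hT₀⟩ := eventually_atTop.mp
      (flow_eventually_infDist_lt G x₀ A hx₀basin (r / 2) (by linarith))
    -- the chain
    set Tc : ℝ := max 1 (max T₀ Tu) with hTcdef
    have hTc1 : (1 : ℝ) ≤ Tc := le_max_left _ _
    have hTcT₀ : T₀ ≤ Tc := le_trans (le_max_left _ _) (le_max_right _ _)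
    have hTcTu : Tu ≤ Tc := le_trans (le_max_right _ _) (le_max_right _ _)
    obtain ⟨m, xs, tss, hm1, hxs0, hxsm, hstep⟩ := hchain x₀ (r / 2) Tc (by linarith) (by linarith)
    have key : ∀ i : ℕ, i ≤ m → 1 ≤ i → infDist (xs i) A < r := by
      intro i
      induction i with
      | zero => intro _ h; omega
      | succ n ih =>
        intro hle _
        obtain ⟨hT, hd⟩ := hstep n (by omega)
        have hinf : infDist (G (tss (n + 1)) (xs n)) A < r / 2 := by
          rcases Nat.eq_zero_or_pos n with h0 | hpos
          · subst h0
            rw [hxs0]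
            exact hT₀ _ (le_trans hTcT₀ hT)
          · have hxn : infDist (xs n) A < r := ih (by omega) hpos
            exact huni (xs n) hxn.le _ (le_trans hTcTu hT)
        have h3 : infDist (xs (n + 1)) A ≤
            infDist (G (tss (n + 1)) (xs n)) A + dist (xs (n + 1)) (G (tss (n + 1)) (xs n)) :=
          infDist_le_infDist_add_dist
        rw [dist_comm] at hd
        linarith
    have hfin := key m le_rfl hm1
    rw [hxsm] at hfin
    have : r < dx0 := by linarith
    exact absurd hfin (not_lt.mpr this.le)
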